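/- Let H be a finite-dimensional Hilbert space and T₁, T₂, T₃ ∈ B(H) with 0 ≤ T₁T₁* + T₂T₂* − T₃T₃* ≤ I, T the positive square root. Then ran T = { T₁z₁ + T₂z₂ − T₃z₃ : z₁,z₂,z₃ ∈ H, ‖z₁‖² + ‖z₂‖² − ‖z₃‖² ≥ 0 } ∩ ran T, and in particular every u ∈ ran T is of the form T₁z₁ + T₂z₂ − T₃z₃ with ‖z₁‖² + ‖z₂‖² ≥ ‖z₃‖². -/

import Mathlib

set_option synthInstance.maxHeartbeats 800000
set_option maxHeartbeats 1000000

open ContinuousLinearMap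

local notation "⟪" x ", " y "⟫" => @inner ℂ _ _ x y

/-- In finite dimensions,
`ran T = {T₁z₁ + T₂z₂ − T₃z₃ : ‖z₁‖² + ‖z₂‖² − ‖z₃‖² ≥ 0} ∩ ran T`; in particular every
`u ∈ ran T` is of the form `T₁z₁ + T₂z₂ − T₃z₃` with `‖z₁‖² + ‖z₂‖² ≥ ‖z₃‖²`. -/
theorem finite_dim_range_description {H : Type*} [NormedAddCommGroup H] [InnerProductSpace ℂ H]
    [FiniteDimensional ℂ H] (T₁ T₂ T₃ : H →L[ℂ] H)
    (hpos : (T₁ ∘L adjoint T₁ + T₂ ∘L adjoint T₂ - T₃ ∘L adjoint T₃).IsPositive)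
    (hcontr : (1 - (T₁ ∘L adjoint T₁ + T₂ ∘L adjoint T₂ - T₃ ∘L adjoint T₃)).IsPositive)
    (T : H →L[ℂ] H)
    (hT : T = CFC.sqrt (T₁ ∘L adjoint T₁ + T₂ ∘L adjoint T₂ - T₃ ∘L adjoint T₃)) :
    Set.range T =
      {u : H | ∃ z₁ z₂ z₃ : H, u = T₁ z₁ + T₂ z₂ - T₃ z₃ ∧
        0 ≤ ‖z₁‖ ^ 2 + ‖z₂‖ ^ 2 - ‖z₃‖ ^ 2} ∩ Set.range T ∧
      ∀ u ∈ Set.range T, ∃ z₁ z₂ z₃ : H,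
        u = T₁ z₁ + T₂ z₂ - T₃ z₃ ∧ ‖z₃‖ ^ 2 ≤ ‖z₁‖ ^ 2 + ‖z₂‖ ^ 2 := by
  set S : H →L[ℂ] H := T₁ ∘L adjoint T₁ + T₂ ∘L adjoint T₂ - T₃ ∘L adjoint T₃ with hS
  have hSpos : (0 : H →L[ℂ] H) ≤ S := (nonneg_iff_isPositive S).mpr hpos
  have hTpos : (0 : H →L[ℂ] H) ≤ T := hT ▸ CFC.sqrt_nonneg S
  have hTsa : IsSelfAdjoint T := ((nonneg_iff_isPositive T).mp hTpos).isSelfAdjoint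
  have hTT : T * T = S := by rw [hT]; exact CFC.sqrt_mul_sqrt_self S hSpos
  have hTTapp : ∀ x, T (T x) = S x := fun x => by
    rw [← hTT]; rfl
  -- key: the (set) ranges of T and S coincide
  have hker : LinearMap.ker (S : H →ₗ[ℂ] H) = LinearMap.ker (T : H →ₗ[ℂ] H) := by
    apply le_antisymm
    · intro y hy
      have hy' : S y = 0 := hy
      have h1 : ⟪T y, T y⟫ = 0 := by
        have := ContinuousLinearMap.adjoint_inner_left T (T y) y
        rw [hTsa.adjoint_eq] at this
        rw [this, hTTapp, hy', inner_zero_right]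
      have : T y = 0 := inner_self_eq_zero.mp h1
      exact this
    · intro y hy
      have hy' : T y = 0 := hy
      have : S y = 0 := by rw [← hTTapp, hy', map_zero]
      exact this
  have hrange_le : LinearMap.range (S : H →ₗ[ℂ] H) ≤ LinearMap.range (T : H →ₗ[ℂ] H) := by
    rintro _ ⟨y, rfl⟩
    exact ⟨T y, hTTapp y⟩
  have hrange : LinearMap.range (S : H →ₗ[ℂ] H) = LinearMap.range (T : H →ₗ[ℂ] H) := by
    apply Submodule.eq_of_le_of_finrank_eq hrange_le
    have h1 := LinearMap.finrank_range_add_finrank_ker (S : H →ₗ[ℂ] H)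
    have h2 := LinearMap.finrank_range_add_finrank_ker (T : H →ₗ[ℂ] H)
    rw [hker] at h1
    omega
  -- construction of the z's
  have key : ∀ u ∈ Set.range T, ∃ z₁ z₂ z₃ : H,
      u = T₁ z₁ + T₂ z₂ - T₃ z₃ ∧ ‖z₃‖ ^ 2 ≤ ‖z₁‖ ^ 2 + ‖z₂‖ ^ 2 := by
    rintro _ ⟨x, rfl⟩
    have : T x ∈ LinearMap.range (S : H →ₗ[ℂ] H) := by
      rw [hrange]; exact ⟨x, rfl⟩
    obtain ⟨y, hy⟩ := this
    refine ⟨adjoint T₁ y, adjoint T₂ y, adjoint T₃ y, ?_, ?_⟩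
    · have : S y = T₁ (adjoint T₁ y) + T₂ (adjoint T₂ y) - T₃ (adjoint T₃ y) := by
        simp [hS]
      rw [← hy]; exact this.symm
    · have hre := hpos.2 y
      rw [ContinuousLinearMap.reApplyInnerSelf] at hre
      have hinner : ∀ A : H →L[ℂ] H, RCLike.re ⟪(A ∘L adjoint A) y, y⟫
          = ‖adjoint A y‖ ^ 2 := by
        intro A
        have h := ContinuousLinearMap.adjoint_inner_right A (adjoint A y) y
        rw [ContinuousLinearMap.comp_apply, ← h]
        exact inner_self_eq_norm_sq _
      have hexp : RCLike.re ⟪S y, y⟫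
          = ‖adjoint T₁ y‖ ^ 2 + ‖adjoint T₂ y‖ ^ 2 - ‖adjoint T₃ y‖ ^ 2 := by
        rw [hS]
        simp only [ContinuousLinearMap.sub_apply, ContinuousLinearMap.add_apply,
          inner_sub_left, inner_add_left, map_sub, map_add]
        rw [hinner T₁, hinner T₂, hinner T₃]
      rw [hexp] at hre
      linarith
  refine ⟨?_, key⟩
  ext u
  constructor
  · intro hu
    obtain ⟨z₁, z₂, z₃, h1, h2⟩ := key u hu
    exact ⟨⟨z₁, z₂, z₃, h1, by linarith⟩, hu⟩
  · exact fun h => h.2
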